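/- arXiv:2403.00646 — 2 statements merged into one kernel-verified Lean document; each statement's English description precedes it below -/
import Mathlib

section
/- Every energy-preserving Hessian can be parameterized by skew-symmetric blocks: if H ∈ ℝ^{n×n²} satisfies zᵀH(z⊗z) = 0 for all z ∈ ℝⁿ, then there exist skew-symmetric matrices H̃₁, …, H̃ₙ ∈ ℝ^{n×n} such that H̃ := [H̃₁, …, H̃ₙ] satisfies H̃(z⊗z) = H(z⊗z) for all z ∈ ℝⁿ. -/
open Matrix

/-- The Kronecker product of two vectors in `ℝⁿ`, indexed by pairs:
`(z ⊗ w)_{(j,k)} = z_j w_k`. -/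
def kron {n : ℕ} (z w : Fin n → ℝ) : Fin n × Fin n → ℝ := fun p => z p.1 * w p.2

/-- Every energy-preserving Hessian `H ∈ ℝ^{n×n²}` (i.e. `zᵀH(z⊗z) = 0` for all
`z`) can be replaced, without changing the vector field `z ↦ H(z⊗z)`, by a
Hessian `H̃ = [H̃₁, …, H̃ₙ]` whose blocks `H̃ᵢ` are all skew-symmetric. -/
theorem stmt_5 {n : ℕ} (H : Matrix (Fin n) (Fin n × Fin n) ℝ)
    (hEP : ∀ z : Fin n → ℝ, z ⬝ᵥ H.mulVec (kron z z) = 0) :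
    ∃ Ht : Fin n → Matrix (Fin n) (Fin n) ℝ,
      (∀ i, (Ht i)ᵀ = -(Ht i)) ∧
      ∀ z : Fin n → ℝ,
        (Matrix.of fun a (p : Fin n × Fin n) => Ht p.1 a p.2).mulVec (kron z z)
          = H.mulVec (kron z z) := by
  set c : Fin n → Fin n → Fin n → ℝ := fun a b d => H a (b, d) with hc
  -- restate hEP as nested sums
  have hQ : ∀ z : Fin n → ℝ, ∑ i, z i * ∑ j, z j * ∑ k, z k * c i j k = 0 := by
    intro z
    have := hEP z
    simp only [dotProduct, mulVec, Fintype.sum_prod_type, kron] at this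
    rw [← this]
    refine Finset.sum_congr rfl fun i _ => ?_
    congr 1
    refine Finset.sum_congr rfl fun j _ => ?_
    rw [Finset.mul_sum]
    refine Finset.sum_congr rfl fun k _ => ?_
    simp only [hc]; ring
  have key : ∀ a b d : Fin n,
      c a b d + c a d b + c b a d + c b d a + c d a b + c d b a = 0 := by
    intro a b d
    have collapse3 : ∀ g : Fin n → ℝ,
        ∑ i, (Pi.single a 1 + Pi.single b 1 + Pi.single d 1 : Fin n → ℝ) i * g i
          = g a + g b + g d := by
      intro g
      simp [Pi.single_apply, add_mul, Finset.sum_add_distrib, ite_mul,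
        Finset.sum_ite_eq']
    have collapse2 : ∀ (x y : Fin n) (g : Fin n → ℝ),
        ∑ i, (Pi.single x 1 + Pi.single y 1 : Fin n → ℝ) i * g i = g x + g y := by
      intro x y g
      simp [Pi.single_apply, add_mul, Finset.sum_add_distrib, ite_mul,
        Finset.sum_ite_eq']
    have collapse1 : ∀ (x : Fin n) (g : Fin n → ℝ),
        ∑ i, (Pi.single x 1 : Fin n → ℝ) i * g i = g x := by
      intro x g
      simp [Pi.single_apply, ite_mul, Finset.sum_ite_eq']
    have H3 := hQ (Pi.single a 1 + Pi.single b 1 + Pi.single d 1)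
    simp only [collapse3] at H3
    have Hab := hQ (Pi.single a 1 + Pi.single b 1)
    simp only [collapse2] at Hab
    have Had := hQ (Pi.single a 1 + Pi.single d 1)
    simp only [collapse2] at Had
    have Hbd := hQ (Pi.single b 1 + Pi.single d 1)
    simp only [collapse2] at Hbd
    have Ha := hQ (Pi.single a 1)
    simp only [collapse1] at Ha
    have Hb := hQ (Pi.single b 1)
    simp only [collapse1] at Hb
    have Hd := hQ (Pi.single d 1)
    simp only [collapse1] at Hd
    linarith
  -- define the skew blocks
  refine ⟨fun j => Matrix.of fun i k => (c i j k + c i k j - c k j i - c k i j) / 3, ?_, ?_⟩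
  · intro j
    ext i k
    simp [Matrix.transpose_apply]
    ring
  · intro z
    funext i
    show ∑ p : Fin n × Fin n, _ = ∑ p : Fin n × Fin n, _
    simp only [mulVec, dotProduct, Fintype.sum_prod_type, kron, Matrix.of_apply]
    set T : Fin n → Fin n → Fin n → ℝ :=
      fun j i k => (c i j k + c i k j - c k j i - c k i j) / 3 with hT
    have swap : ∀ f : Fin n → Fin n → ℝ,
        ∑ j, ∑ k, f j k * (z j * z k) = ∑ j, ∑ k, f k j * (z j * z k) := by
      intro f
      rw [Finset.sum_comm]
      refine Finset.sum_congr rfl fun j _ => Finset.sum_congr rfl fun k _ => by ring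
    have main2 : ∑ j, ∑ k, (T j i k + T k i j) * (z j * z k)
        = ∑ j, ∑ k, (c i j k + c i k j) * (z j * z k) := by
      refine Finset.sum_congr rfl fun j _ => Finset.sum_congr rfl fun k _ => ?_
      have := key i j k
      have h : T j i k + T k i j = c i j k + c i k j := by
        simp only [hT]; linarith
      rw [h]
    have l1 : ∑ j, ∑ k, (T j i k + T k i j) * (z j * z k)
        = 2 * ∑ j, ∑ k, T j i k * (z j * z k) := by
      have := swap (fun j k => T j i k)
      simp only [add_mul, Finset.sum_add_distrib]
      rw [← this]; ring
    have l2 : ∑ j, ∑ k, (c i j k + c i k j) * (z j * z k)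
        = 2 * ∑ j, ∑ k, c i j k * (z j * z k) := by
      have := swap (fun j k => c i j k)
      simp only [add_mul, Finset.sum_add_distrib]
      rw [← this]; ring
    have goal2 : ∑ j, ∑ k, T j i k * (z j * z k) = ∑ j, ∑ k, c i j k * (z j * z k) := by
      have := main2; rw [l1, l2] at this; linarith
    calc ∑ j, ∑ k, T j i k * (z j * z k) = ∑ j, ∑ k, c i j k * (z j * z k) := goal2
      _ = _ := rfl
end

section
/- Under the assumptions of the differential inequality Ė(x(t)) ≤ -σ_min(R)‖x(t)‖₂² + c‖x(t)‖₂ with c = ‖B‖₂‖u‖_{L∞} and r = c/σ_min(R), the state norm is strictly decreasing whenever ‖x(t)‖₂ > r; consequently every solution of ẋ = (J-R)x + H(x⊗x) + Bu with bounded input u satisfies ‖x(t)‖₂ ≤ max{‖x(0)‖₂, r} for all t ≥ 0. -/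
open Matrix

/-- The Euclidean 2-norm of a vector in `ℝⁿ`. -/
noncomputable def norm2 {n : ℕ} (v : Fin n → ℝ) : ℝ := Real.sqrt (v ⬝ᵥ v)

/-- The spectral norm (L2 operator norm) of a real matrix. -/
noncomputable def specNorm {n m : ℕ} (B : Matrix (Fin n) (Fin m) ℝ) : ℝ :=
  sSup {c | ∃ v : Fin m → ℝ, norm2 v ≤ 1 ∧ c = norm2 (B.mulVec v)}

/-- The smallest eigenvalue of a Hermitian real matrix. -/
noncomputable def sigmaMin {n : ℕ} (R : Matrix (Fin n) (Fin n) ℝ)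
    (hR : R.IsHermitian) : ℝ := ⨅ i, hR.eigenvalues i

/-! ### Auxiliary lemmas -/

lemma dot_self_nonneg {n : ℕ} (v : Fin n → ℝ) : 0 ≤ v ⬝ᵥ v :=
  Finset.sum_nonneg fun i _ => mul_self_nonneg _

lemma norm2_nonneg' {n : ℕ} (v : Fin n → ℝ) : 0 ≤ norm2 v := Real.sqrt_nonneg _

lemma norm2_mul_self {n : ℕ} (v : Fin n → ℝ) : norm2 v * norm2 v = v ⬝ᵥ v :=
  Real.mul_self_sqrt (dot_self_nonneg v)

lemma norm2_zero' {n : ℕ} : norm2 (0 : Fin n → ℝ) = 0 := by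
  simp [norm2]

lemma norm2_eq_zero_iff {n : ℕ} {v : Fin n → ℝ} : norm2 v = 0 ↔ v = 0 := by
  constructor
  · intro h
    have h2 : v ⬝ᵥ v = 0 := by
      have := norm2_mul_self v
      rw [h] at this
      linarith
    funext i
    have := (Finset.sum_eq_zero_iff_of_nonneg
      (fun j _ => mul_self_nonneg (v j))).1 h2 i (Finset.mem_univ i)
    exact mul_self_eq_zero.mp this
  · rintro rfl; exact norm2_zero'

lemma norm2_smul {n : ℕ} (c : ℝ) (v : Fin n → ℝ) : norm2 (c • v) = |c| * norm2 v := by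
  unfold norm2
  have : (c • v) ⬝ᵥ (c • v) = c ^ 2 * (v ⬝ᵥ v) := by
    simp [dotProduct, Finset.mul_sum]
    congr 1; funext i; ring
  rw [this, Real.sqrt_mul (sq_nonneg c), Real.sqrt_sq_eq_abs]

/-- Cauchy–Schwarz for the dot product. -/
lemma dot_le_norm2_mul_norm2 {n : ℕ} (v w : Fin n → ℝ) : v ⬝ᵥ w ≤ norm2 v * norm2 w := by
  have hcs := Finset.sum_mul_sq_le_sq_mul_sq Finset.univ v w
  have h1 : v ⬝ᵥ w ≤ Real.sqrt ((v ⬝ᵥ w) ^ 2) := by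
    rw [Real.sqrt_sq_eq_abs]; exact le_abs_self _
  have h2 : Real.sqrt ((v ⬝ᵥ w) ^ 2) ≤ Real.sqrt ((∑ i, v i ^ 2) * (∑ i, w i ^ 2)) :=
    Real.sqrt_le_sqrt hcs
  have h3 : Real.sqrt ((∑ i, v i ^ 2) * (∑ i, w i ^ 2)) = norm2 v * norm2 w := by
    rw [Real.sqrt_mul (Finset.sum_nonneg fun i _ => sq_nonneg _)]
    unfold norm2
    congr 1 <;> · congr 1; simp [dotProduct, sq]
  calc v ⬝ᵥ w ≤ _ := h1
    _ ≤ _ := h2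
    _ = _ := h3

lemma specNorm_set_bddAbove {n m : ℕ} (B : Matrix (Fin n) (Fin m) ℝ) :
    BddAbove {c | ∃ v : Fin m → ℝ, norm2 v ≤ 1 ∧ c = norm2 (B.mulVec v)} := by
  refine ⟨Real.sqrt (∑ i, ∑ j, (B i j) ^ 2), ?_⟩
  rintro c ⟨v, hv, rfl⟩
  unfold norm2
  apply Real.sqrt_le_sqrt
  have hvv : v ⬝ᵥ v ≤ 1 := by
    have := norm2_mul_self v
    nlinarith [norm2_nonneg' v]
  have : B.mulVec v ⬝ᵥ B.mulVec v = ∑ i, (∑ j, B i j * v j) ^ 2 := by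
    simp [dotProduct, mulVec, sq]
  rw [this]
  apply Finset.sum_le_sum
  intro i _
  have hcs := Finset.sum_mul_sq_le_sq_mul_sq Finset.univ (fun j => B i j) v
  have hvv2 : ∑ j, v j ^ 2 ≤ 1 := by
    have : ∑ j, v j ^ 2 = v ⬝ᵥ v := by simp [dotProduct, sq]
    linarith [this ▸ hvv]
  nlinarith [Finset.sum_nonneg (fun j (_ : j ∈ Finset.univ) => sq_nonneg (B i j))]

lemma specNorm_nonneg {n m : ℕ} (B : Matrix (Fin n) (Fin m) ℝ) : 0 ≤ specNorm B := by
  have h0 : (0 : ℝ) ∈ {c | ∃ v : Fin m → ℝ, norm2 v ≤ 1 ∧ c = norm2 (B.mulVec v)} := by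
    exact ⟨0, by simp [norm2_zero'], by simp [norm2_zero']⟩
  exact le_csSup (specNorm_set_bddAbove B) h0

lemma norm2_mulVec_le {n m : ℕ} (B : Matrix (Fin n) (Fin m) ℝ) (v : Fin m → ℝ) :
    norm2 (B.mulVec v) ≤ specNorm B * norm2 v := by
  by_cases hv : v = 0
  · simp [hv, norm2_zero', Matrix.mulVec_zero]
  · have hnv : 0 < norm2 v :=
      lt_of_le_of_ne (norm2_nonneg' v) (fun h => hv (norm2_eq_zero_iff.mp h.symm))
    set w : Fin m → ℝ := (norm2 v)⁻¹ • v with hw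
    have hnw : norm2 w = 1 := by
      rw [hw, norm2_smul, abs_of_pos (inv_pos.2 hnv), inv_mul_cancel₀ hnv.ne']
    have hmem : norm2 (B.mulVec w) ∈
        {c | ∃ v : Fin m → ℝ, norm2 v ≤ 1 ∧ c = norm2 (B.mulVec v)} :=
      ⟨w, le_of_eq hnw, rfl⟩
    have hle : norm2 (B.mulVec w) ≤ specNorm B := le_csSup (specNorm_set_bddAbove B) hmem
    have hBv : B.mulVec v = norm2 v • B.mulVec w := by
      rw [hw, Matrix.mulVec_smul, smul_smul, mul_inv_cancel₀ hnv.ne', one_smul]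
    rw [hBv, norm2_smul, abs_of_pos hnv]
    calc norm2 v * norm2 (B.mulVec w) ≤ norm2 v * specNorm B :=
          mul_le_mul_of_nonneg_left hle hnv.le
      _ = specNorm B * norm2 v := mul_comm _ _

lemma star_eq_transpose' {n : ℕ} (V : Matrix (Fin n) (Fin n) ℝ) : star V = Vᵀ := by
  ext i j
  simp [Matrix.conjTranspose]

/-- Rayleigh quotient lower bound: `σ_min (v⬝v) ≤ v⬝Rv` for Hermitian `R`. -/
lemma rayleigh_min {n : ℕ} {R : Matrix (Fin n) (Fin n) ℝ} (hR : R.IsHermitian)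
    (v : Fin n → ℝ) : (⨅ i, hR.eigenvalues i) * (v ⬝ᵥ v) ≤ v ⬝ᵥ R.mulVec v := by
  classical
  rcases Nat.eq_zero_or_pos n with hn | hn
  · subst hn
    simp [dotProduct]
  set V : Matrix (Fin n) (Fin n) ℝ := (hR.eigenvectorUnitary : Matrix (Fin n) (Fin n) ℝ) with hVdef
  have hV : V ∈ Matrix.unitaryGroup (Fin n) ℝ := hR.eigenvectorUnitary.2
  have hVV : V * Vᵀ = 1 := by
    have := (Matrix.mem_unitaryGroup_iff).mp hV
    rwa [star_eq_transpose'] at this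
  set y : Fin n → ℝ := Vᵀ.mulVec v with hy
  have hdot : ∀ (M : Matrix (Fin n) (Fin n) ℝ) (a b : Fin n → ℝ),
      a ⬝ᵥ M.mulVec b = Mᵀ.mulVec a ⬝ᵥ b := by
    intro M a b
    rw [Matrix.dotProduct_mulVec, Matrix.mulVec_transpose]
  have hyy : y ⬝ᵥ y = v ⬝ᵥ v := by
    rw [hy, ← hdot V v (Vᵀ.mulVec v), Matrix.mulVec_mulVec, hVV, Matrix.one_mulVec]
  have hRv : v ⬝ᵥ R.mulVec v = ∑ i, hR.eigenvalues i * (y i * y i) := by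
    have hspec := hR.spectral_theorem
    rw [Unitary.conjStarAlgAut_apply, star_eq_transpose'] at hspec
    conv_lhs => rw [hspec]
    rw [← Matrix.mulVec_mulVec, ← Matrix.mulVec_mulVec, hdot V]
    have hdiag : Matrix.diagonal (RCLike.ofReal ∘ hR.eigenvalues) =
        Matrix.diagonal hR.eigenvalues := by
      congr 1
    rw [hdiag]
    simp only [← hy]
    simp [dotProduct, Matrix.mulVec_diagonal]
    congr 1; funext i; ring
  rw [hRv, ← hyy]
  have hbdd : BddBelow (Set.range hR.eigenvalues) := (Set.finite_range _).bddBelow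
  have hle : ∀ i, (⨅ j, hR.eigenvalues j) ≤ hR.eigenvalues i := fun i => ciInf_le hbdd i
  calc (⨅ i, hR.eigenvalues i) * (y ⬝ᵥ y)
      = ∑ i, (⨅ j, hR.eigenvalues j) * (y i * y i) := by
        rw [dotProduct, Finset.mul_sum]
    _ ≤ ∑ i, hR.eigenvalues i * (y i * y i) :=
        Finset.sum_le_sum fun i _ =>
          mul_le_mul_of_nonneg_right (hle i) (mul_self_nonneg _)

lemma sigmaMin_pos {n : ℕ} (hn : 0 < n) {R : Matrix (Fin n) (Fin n) ℝ}
    (hR : R.PosDef) : 0 < sigmaMin R hR.1 := by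
  have : Nonempty (Fin n) := ⟨⟨0, hn⟩⟩
  obtain ⟨i, hi⟩ := Finite.exists_min hR.1.eigenvalues
  have h1 : hR.1.eigenvalues i ≤ sigmaMin R hR.1 := le_ciInf hi
  exact lt_of_lt_of_le (hR.eigenvalues_pos i) h1

/-- For `ẋ = (J-R)x + H(x⊗x) + Bu` with `J` skew-symmetric, `R` symmetric
positive definite, `H` energy-preserving and `‖u(t)‖₂ ≤ U`, letting
`r = ‖B‖₂ U / σ_min(R)`: the state norm is strictly decreasing while it
exceeds `r`, and `‖x(t)‖₂ ≤ max {‖x(0)‖₂, r}` for all `t ≥ 0`. -/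
theorem stmt_7 {n m : ℕ} (J R : Matrix (Fin n) (Fin n) ℝ)
    (B : Matrix (Fin n) (Fin m) ℝ)
    (H : Matrix (Fin n) (Fin n × Fin n) ℝ)
    (hJ : Jᵀ = -J) (hR : R.PosDef)
    (hEP : ∀ z : Fin n → ℝ, z ⬝ᵥ H.mulVec (kron z z) = 0)
    (u : ℝ → Fin m → ℝ) (U : ℝ) (hU : ∀ t : ℝ, norm2 (u t) ≤ U)
    (x : ℝ → Fin n → ℝ)
    (hx : ∀ t : ℝ, HasDerivAt x
      ((J - R).mulVec (x t) + H.mulVec (kron (x t) (x t)) + B.mulVec (u t)) t) :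
    (∀ t₀ t₁ : ℝ, 0 ≤ t₀ → t₀ < t₁ →
      (∀ s ∈ Set.Icc t₀ t₁,
        specNorm B * U / sigmaMin R hR.1 < norm2 (x s)) →
      norm2 (x t₁) < norm2 (x t₀)) ∧
    (∀ t : ℝ, 0 ≤ t →
      norm2 (x t) ≤ max (norm2 (x 0)) (specNorm B * U / sigmaMin R hR.1)) := by
  classical
  rcases Nat.eq_zero_or_pos n with hn | hn
  · -- trivial case n = 0 : all state norms are zero
    subst hn
    have hz : ∀ t, norm2 (x t) = 0 := fun t => by simp [norm2, dotProduct]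
    have hr0 : specNorm B * U / sigmaMin R hR.1 = specNorm B * U / 0 := by
      unfold sigmaMin
      rw [Real.iInf_of_isEmpty]
    constructor
    · intro t₀ t₁ ht₀ ht hyp
      exfalso
      have := hyp t₀ ⟨le_refl _, ht.le⟩
      rw [hz, hr0, div_zero] at this
      exact lt_irrefl 0 this
    · intro t _
      rw [hz]
      exact le_max_of_le_left (by rw [hz])
  -- main case n > 0
  set σ : ℝ := sigmaMin R hR.1 with hσdef
  set c : ℝ := specNorm B * U with hcdef
  have hσ : 0 < σ := sigmaMin_pos hn hR
  have hU0 : 0 ≤ U := le_trans (norm2_nonneg' (u 0)) (hU 0)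
  have hc0 : 0 ≤ c := mul_nonneg (specNorm_nonneg B) hU0
  have hr0 : 0 ≤ c / σ := div_nonneg hc0 hσ.le
  -- the vector field
  set f : ℝ → Fin n → ℝ :=
    fun t => (J - R).mulVec (x t) + H.mulVec (kron (x t) (x t)) + B.mulVec (u t) with hfdef
  -- derivative of the energy E s = x s ⬝ᵥ x s
  have hE : ∀ t, HasDerivAt (fun s => x s ⬝ᵥ x s) (2 * (x t ⬝ᵥ f t)) t := by
    intro t
    have hxi := hasDerivAt_pi.1 (hx t)
    have hsum : HasDerivAt (fun s => ∑ i, x s i * x s i)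
        (∑ i, (f t i * x t i + x t i * f t i)) t :=
      HasDerivAt.fun_sum fun i _ => (hxi i).mul (hxi i)
    have heq : (∑ i, (f t i * x t i + x t i * f t i)) = 2 * (x t ⬝ᵥ f t) := by
      rw [dotProduct, Finset.mul_sum]
      congr 1; funext i; ring
    rw [heq] at hsum
    exact hsum
  have hEcont : Continuous (fun s => x s ⬝ᵥ x s) :=
    continuous_iff_continuousAt.2 fun t => (hE t).continuousAt
  have hNcont : Continuous (fun s => norm2 (x s)) :=
    Real.continuous_sqrt.comp hEcont
  -- skew-symmetry kills J
  have hJ0 : ∀ v : Fin n → ℝ, v ⬝ᵥ J.mulVec v = 0 := by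
    intro v
    have hJ' : ∀ i j, J i j = -J j i := by
      intro i j
      have := congrFun (congrFun hJ j) i
      simpa [Matrix.transpose_apply] using this
    have key : v ⬝ᵥ J.mulVec v = -(v ⬝ᵥ J.mulVec v) := by
      simp only [dotProduct, mulVec, Finset.mul_sum]
      have h1 : ∀ a b : Fin n, v a * (J a b * v b) = -(v b * (J b a * v a)) := by
        intro a b; rw [hJ' a b]; ring
      calc ∑ a, ∑ b, v a * (J a b * v b)
          = ∑ a, ∑ b, -(v b * (J b a * v a)) := by
            apply Finset.sum_congr rfl; intro a _
            apply Finset.sum_congr rfl; intro b _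
            exact h1 a b
        _ = -∑ a, ∑ b, v b * (J b a * v a) := by
            simp [Finset.sum_neg_distrib]
        _ = -∑ b, ∑ a, v b * (J b a * v a) := by rw [Finset.sum_comm]
    linarith
  -- key bound on the derivative term
  have hbound : ∀ t, x t ⬝ᵥ f t ≤ norm2 (x t) * (c - σ * norm2 (x t)) := by
    intro t
    set N := norm2 (x t) with hN
    have hNN : N * N = x t ⬝ᵥ x t := norm2_mul_self (x t)
    have h1 : x t ⬝ᵥ f t =
        x t ⬝ᵥ J.mulVec (x t) - x t ⬝ᵥ R.mulVec (x t)
          + x t ⬝ᵥ H.mulVec (kron (x t) (x t)) + x t ⬝ᵥ B.mulVec (u t) := by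
      rw [hfdef]
      simp [Matrix.sub_mulVec, dotProduct_add, dotProduct_sub]
    rw [h1, hJ0, hEP (x t), zero_sub, add_zero]
    have h2 : σ * (N * N) ≤ x t ⬝ᵥ R.mulVec (x t) := by
      rw [hNN, hσdef]
      exact rayleigh_min hR.1 (x t)
    have h3 : x t ⬝ᵥ B.mulVec (u t) ≤ N * c := by
      calc x t ⬝ᵥ B.mulVec (u t) ≤ N * norm2 (B.mulVec (u t)) :=
            dot_le_norm2_mul_norm2 _ _
        _ ≤ N * (specNorm B * norm2 (u t)) := by
            apply mul_le_mul_of_nonneg_left (norm2_mulVec_le B (u t)) (norm2_nonneg' _)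
        _ ≤ N * (specNorm B * U) := by
            apply mul_le_mul_of_nonneg_left _ (norm2_nonneg' _)
            exact mul_le_mul_of_nonneg_left (hU t) (specNorm_nonneg B)
        _ = N * c := by rw [hcdef]
    nlinarith
  have hderiv : ∀ s, deriv (fun s => x s ⬝ᵥ x s) s = 2 * (x s ⬝ᵥ f s) :=
    fun s => (hE s).deriv
  -- r < N s implies the derivative is negative
  have hderivneg : ∀ s, c / σ < norm2 (x s) → deriv (fun s => x s ⬝ᵥ x s) s < 0 := by
    intro s hs
    rw [hderiv s]
    have hNpos : 0 < norm2 (x s) := lt_of_le_of_lt hr0 hs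
    have hcσ : c < σ * norm2 (x s) := by
      rw [div_lt_iff₀ hσ] at hs
      nlinarith
    nlinarith [hbound s]
  have hderivnonpos : ∀ s, c / σ ≤ norm2 (x s) → deriv (fun s => x s ⬝ᵥ x s) s ≤ 0 := by
    intro s hs
    rw [hderiv s]
    have hNpos : 0 ≤ norm2 (x s) := norm2_nonneg' _
    have hcσ : c ≤ σ * norm2 (x s) := by
      rw [div_le_iff₀ hσ] at hs
      nlinarith
    nlinarith [hbound s]
  constructor
  · -- part (a): strict decrease
    intro t₀ t₁ ht₀ ht hyp
    have hanti : StrictAntiOn (fun s => x s ⬝ᵥ x s) (Set.Icc t₀ t₁) := by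
      apply strictAntiOn_of_deriv_neg (convex_Icc _ _) hEcont.continuousOn
      intro s hs
      rw [interior_Icc] at hs
      exact hderivneg s (hyp s (Set.Ioo_subset_Icc_self hs))
    have hlt : x t₁ ⬝ᵥ x t₁ < x t₀ ⬝ᵥ x t₀ :=
      hanti (Set.left_mem_Icc.2 ht.le) (Set.right_mem_Icc.2 ht.le) ht
    unfold norm2
    exact Real.sqrt_lt_sqrt (dot_self_nonneg _) hlt
  · -- part (b): uniform bound
    intro t ht
    by_contra hcon
    push_neg at hcon
    set M : ℝ := max (norm2 (x 0)) (c / σ) with hM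
    have hM0 : norm2 (x 0) ≤ M := le_max_left _ _
    have hMr : c / σ ≤ M := le_max_right _ _
    have htpos : 0 < t := by
      rcases lt_or_eq_of_le ht with h | h
      · exact h
      · exfalso; rw [← h] at hcon; exact absurd hM0 (not_le.2 hcon)
    set A : Set ℝ := {s | s ∈ Set.Icc 0 t ∧ norm2 (x s) ≤ M} with hA
    have h0A : (0 : ℝ) ∈ A := ⟨⟨le_refl _, htpos.le⟩, hM0⟩
    have hAbdd : BddAbove A := ⟨t, fun s hs => hs.1.2⟩
    have hAclosed : IsClosed A := by
      have : A = Set.Icc 0 t ∩ {s | norm2 (x s) ≤ M} := rfl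
      rw [this]
      exact isClosed_Icc.inter (isClosed_le hNcont continuous_const)
    set t₀ : ℝ := sSup A with ht₀def
    have ht₀A : t₀ ∈ A := hAclosed.csSup_mem ⟨0, h0A⟩ hAbdd
    have ht₀t : t₀ < t := by
      rcases lt_or_eq_of_le ht₀A.1.2 with h | h
      · exact h
      · exfalso; rw [h] at ht₀A; exact absurd ht₀A.2 (not_le.2 hcon)
    have hout : ∀ s, t₀ < s → s ≤ t → M < norm2 (x s) := by
      intro s h1 h2
      by_contra h
      push_neg at h
      have hsA : s ∈ A := ⟨⟨le_trans ht₀A.1.1 h1.le, h2⟩, h⟩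
      exact absurd (le_csSup hAbdd hsA) (not_le.2 h1)
    have hantiE : AntitoneOn (fun s => x s ⬝ᵥ x s) (Set.Icc t₀ t) := by
      apply antitoneOn_of_deriv_nonpos (convex_Icc _ _) hEcont.continuousOn
      · intro s _
        exact (hE s).differentiableAt.differentiableWithinAt
      · intro s hs
        rw [interior_Icc] at hs
        have := hout s hs.1 hs.2.le
        exact hderivnonpos s (le_trans hMr this.le)
    have hEle : x t ⬝ᵥ x t ≤ x t₀ ⬝ᵥ x t₀ :=
      hantiE (Set.left_mem_Icc.2 ht₀t.le) (Set.right_mem_Icc.2 ht₀t.le) ht₀t.le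
    have hNle : norm2 (x t) ≤ norm2 (x t₀) := Real.sqrt_le_sqrt hEle
    exact absurd (le_trans hNle ht₀A.2) (not_le.2 hcon)
end
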